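/- There exists θ₀ ∈ (0,1) such that for every θ ∈ (0,θ₀] there is a constant C > 0 with the following property: for all ε > 0, t ≥ 0 and r ≥ 1, (a) if r ≤ (1+θ)/(2ε) then ε^{−2}|D_ε(r,t)| ≤ C·e^{−θ·t·r²}, and (b) if r > (1+θ)/(2ε) then ε^{−2}|D_ε(r,t)| ≤ C·e^{−t/(2ε²)}·ε^{−1}·r^{−1}. -/

import Mathlib

/-- The entire function `φ(x) = ∑_{j=0}^∞ x^j/(2j+1)!`. -/
noncomputable def phi (x : ℝ) : ℝ := ∑' j : ℕ, x ^ j / (Nat.factorial (2 * j + 1) : ℝ)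

/-- The damped-wave Fourier symbol `D_ε(r,t) = e^{−t/(2ε²)}·t·φ(t²(1/(4ε⁴) − r²/ε²))`. -/
noncomputable def D (ε r t : ℝ) : ℝ :=
  Real.exp (-t / (2 * ε ^ 2)) * t * phi (t ^ 2 * (1 / (4 * ε ^ 4) - r ^ 2 / ε ^ 2))


lemma phi_zero : phi 0 = 1 := by
  rw [phi, tsum_eq_single 0 (by intro j hj; simp [zero_pow hj])]
  simp

lemma phi_sq_mul_self (s : ℝ) : phi (s ^ 2) * s = Real.sinh s := by
  rw [phi, ← tsum_mul_right, Real.sinh_eq_tsum]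
  congr 1; funext j
  rw [div_mul_eq_mul_div, ← pow_mul, ← pow_succ]

lemma phi_neg_sq_mul_self (s : ℝ) : phi (-(s ^ 2)) * s = Real.sin s := by
  rw [phi, ← tsum_mul_right, Real.sin_eq_tsum]
  congr 1; funext j
  rw [div_mul_eq_mul_div, neg_pow, ← pow_mul, mul_assoc, ← pow_succ]

lemma phi_repr_pos (a t : ℝ) (ha : 0 ≤ a) :
    t * phi (t ^ 2 * a) * Real.sqrt a = Real.sinh (t * Real.sqrt a) := by
  have h : t ^ 2 * a = (t * Real.sqrt a) ^ 2 := by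
    rw [mul_pow, Real.sq_sqrt ha]
  rw [h, ← phi_sq_mul_self]; ring

lemma phi_repr_neg (a t : ℝ) (ha : a ≤ 0) :
    t * phi (t ^ 2 * a) * Real.sqrt (-a) = Real.sin (t * Real.sqrt (-a)) := by
  have h : t ^ 2 * a = -((t * Real.sqrt (-a)) ^ 2) := by
    rw [mul_pow, Real.sq_sqrt (by linarith)]; ring
  rw [h, ← phi_neg_sq_mul_self]; ring

lemma phi_abs_le_t (a t : ℝ) (ha : a ≤ 0) (ht : 0 ≤ t) :
    |t * phi (t ^ 2 * a)| ≤ t := by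
  rcases eq_or_lt_of_le ha with rfl | ha'
  · simp [phi_zero, abs_of_nonneg ht]
  · have hs : 0 < Real.sqrt (-a) := Real.sqrt_pos.mpr (by linarith)
    have h := phi_repr_neg a t ha
    have heq : t * phi (t ^ 2 * a) = Real.sin (t * Real.sqrt (-a)) / Real.sqrt (-a) := by
      rw [eq_div_iff hs.ne']; exact h
    have habs : |t * phi (t ^ 2 * a)| = |Real.sin (t * Real.sqrt (-a))| / Real.sqrt (-a) := by
      rw [heq, abs_div, abs_of_pos hs]
    have hsin : |Real.sin (t * Real.sqrt (-a))| ≤ t * Real.sqrt (-a) := by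
      refine (Real.abs_sin_le_abs).trans ?_
      rw [abs_of_nonneg (by positivity)]
    rw [habs]
    calc |Real.sin (t * Real.sqrt (-a))| / Real.sqrt (-a)
        ≤ (t * Real.sqrt (-a)) / Real.sqrt (-a) := by
          gcongr
      _ = t := by field_simp

lemma phi_abs_le_inv (a t : ℝ) (ha : a < 0) :
    |t * phi (t ^ 2 * a)| ≤ 1 / Real.sqrt (-a) := by
  have hs : 0 < Real.sqrt (-a) := Real.sqrt_pos.mpr (by linarith)
  have h := phi_repr_neg a t ha.le
  have heq : t * phi (t ^ 2 * a) = Real.sin (t * Real.sqrt (-a)) / Real.sqrt (-a) := by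
    rw [eq_div_iff hs.ne']; exact h
  have habs : |t * phi (t ^ 2 * a)| = |Real.sin (t * Real.sqrt (-a))| / Real.sqrt (-a) := by
    rw [heq, abs_div, abs_of_pos hs]
  rw [habs]
  gcongr
  exact abs_le.mpr ⟨by linarith [Real.neg_one_le_sin (t * Real.sqrt (-a))],
    Real.sin_le_one _⟩

lemma sinh_le_half_exp (u : ℝ) : Real.sinh u ≤ Real.exp u / 2 := by
  rw [Real.sinh_eq]
  have := Real.exp_pos (-u)
  linarith

lemma sinh_le_mul_exp (u : ℝ) (hu : 0 ≤ u) : Real.sinh u ≤ u * Real.exp u := by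
  rw [Real.sinh_eq]
  have h1 : (-2 * u) + 1 ≤ Real.exp (-2 * u) := Real.add_one_le_exp _
  have h2 : Real.exp (-u) = Real.exp u * Real.exp (-2 * u) := by
    rw [← Real.exp_add]; ring_nf
  have h3 := Real.exp_pos u
  nlinarith [Real.exp_pos (-2 * u)]

lemma mul_exp_neg_le_one (u : ℝ) (hu : 0 ≤ u) : u * Real.exp (-u) ≤ 1 := by
  have h1 : u + 1 ≤ Real.exp u := Real.add_one_le_exp u
  rw [Real.exp_neg, ← div_eq_mul_inv, div_le_one (Real.exp_pos u)]
  linarith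

set_option maxHeartbeats 1000000 in
/-- There is `θ₀ ∈ (0,1)` such that for every `θ ∈ (0,θ₀]` there is `C > 0` with:
for all `ε > 0`, `t ≥ 0`, `r ≥ 1`,
(a) if `r ≤ (1+θ)/(2ε)` then `ε^{−2}|D_ε(r,t)| ≤ C e^{−θtr²}`, and
(b) if `r > (1+θ)/(2ε)` then `ε^{−2}|D_ε(r,t)| ≤ C e^{−t/(2ε²)} ε^{−1} r^{−1}`. -/
theorem dampedWave_symbol_bounds :
    ∃ θ₀ : ℝ, θ₀ ∈ Set.Ioo (0:ℝ) 1 ∧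
      ∀ θ ∈ Set.Ioc (0:ℝ) θ₀, ∃ C : ℝ, 0 < C ∧
        ∀ ε t r : ℝ, 0 < ε → 0 ≤ t → 1 ≤ r →
          (r ≤ (1 + θ) / (2 * ε) →
            |D ε r t| / ε ^ 2 ≤ C * Real.exp (-θ * t * r ^ 2)) ∧
          ((1 + θ) / (2 * ε) < r →
            |D ε r t| / ε ^ 2 ≤ C * Real.exp (-t / (2 * ε ^ 2)) / (ε * r)) := by
  refine ⟨1/4, ⟨by norm_num, by norm_num⟩, ?_⟩
  rintro θ ⟨hθ0, hθ4⟩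
  obtain ⟨C, hCdef⟩ : ∃ C : ℝ, C = 12 + Real.sqrt (1 + 1/(2*θ)) := ⟨_, rfl⟩
  refine ⟨C, by rw [hCdef]; positivity, ?_⟩
  have hC12 : (12:ℝ) ≤ C := by
    have := Real.sqrt_nonneg (1 + 1/(2*θ)); rw [hCdef]; linarith
  intro ε t r hε ht hr
  have hε2 : (0:ℝ) < ε ^ 2 := by positivity
  have hε4 : (0:ℝ) < ε ^ 4 := by positivity
  obtain ⟨x, hx⟩ : ∃ x : ℝ, x = 1 / (4 * ε ^ 4) - r ^ 2 / ε ^ 2 := ⟨_, rfl⟩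
  have hD : |D ε r t| = Real.exp (-t / (2 * ε ^ 2)) * |t * phi (t ^ 2 * x)| := by
    rw [hx, D, mul_assoc, abs_mul, abs_of_pos (Real.exp_pos _)]
  have hE1pos := Real.exp_pos (-t / (2 * ε ^ 2))
  constructor
  · -- case (a)
    intro hra
    have hrε : r * (2 * ε) ≤ 1 + θ := (le_div_iff₀ (by positivity)).mp hra
    have hkeyθ : θ * t * r ^ 2 ≤ t / (4 * ε ^ 2) := by
      rw [le_div_iff₀ (by positivity)]
      have h4 : θ * r ^ 2 * (4 * ε ^ 2) ≤ 1 := by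
        have hq : (r * (2 * ε)) * (r * (2 * ε)) ≤ (1 + θ) * (1 + θ) :=
          mul_le_mul hrε hrε (by positivity) (by linarith)
        have hθ1 : θ * ((1 + θ) * (1 + θ)) ≤ 1 := by nlinarith
        nlinarith [mul_le_mul_of_nonneg_left hq hθ0.le]
      nlinarith
    by_cases hx0 : x ≤ 0
    · -- oscillatory / boundary regime inside case (a)
      have hb := phi_abs_le_t x t hx0 ht
      have hsplit : Real.exp (-t / (2 * ε ^ 2))
          = Real.exp (-(t / (4 * ε ^ 2))) * Real.exp (-(t / (4 * ε ^ 2))) := by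
        rw [← Real.exp_add]; congr 1; field_simp; ring
      have h8 := mul_exp_neg_le_one (t / (4 * ε ^ 2)) (by positivity)
      have hmono : Real.exp (-(t / (4 * ε ^ 2))) ≤ Real.exp (-θ * t * r ^ 2) :=
        Real.exp_le_exp.mpr (by linarith)
      have he1 : (0:ℝ) < Real.exp (-(t / (4 * ε ^ 2))) := Real.exp_pos _
      rw [div_le_iff₀ hε2, hD]
      have hEt : Real.exp (-t / (2 * ε ^ 2)) * t ≤ 4 * ε ^ 2 * Real.exp (-θ * t * r ^ 2) := by
        rw [hsplit]
        calc Real.exp (-(t / (4 * ε ^ 2))) * Real.exp (-(t / (4 * ε ^ 2))) * t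
            = 4 * ε ^ 2 * ((t / (4 * ε ^ 2)) * Real.exp (-(t / (4 * ε ^ 2))))
              * Real.exp (-(t / (4 * ε ^ 2))) := by field_simp
          _ ≤ 4 * ε ^ 2 * 1 * Real.exp (-(t / (4 * ε ^ 2))) := by gcongr
          _ ≤ 4 * ε ^ 2 * 1 * Real.exp (-θ * t * r ^ 2) := by gcongr
          _ = 4 * ε ^ 2 * Real.exp (-θ * t * r ^ 2) := by ring
      calc Real.exp (-t / (2 * ε ^ 2)) * |t * phi (t ^ 2 * x)|
          ≤ Real.exp (-t / (2 * ε ^ 2)) * t := mul_le_mul_of_nonneg_left hb hE1pos.le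
        _ ≤ 4 * ε ^ 2 * Real.exp (-θ * t * r ^ 2) := hEt
        _ ≤ C * Real.exp (-θ * t * r ^ 2) * ε ^ 2 := by
            nlinarith [Real.exp_pos (-θ * t * r ^ 2), mul_pos (Real.exp_pos (-θ * t * r ^ 2)) hε2]
    · push_neg at hx0
      obtain ⟨lam, hlam⟩ : ∃ l : ℝ, l = Real.sqrt x := ⟨_, rfl⟩
      have hlampos : 0 < lam := hlam ▸ Real.sqrt_pos.mpr hx0
      have hu1 : 4 * ε ^ 2 * r ^ 2 < 1 := by
        have h := hx0
        rw [hx, sub_pos, div_lt_div_iff₀ hε2 (by positivity)] at h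
        nlinarith
      have hkey : lam ≤ 1 / (2 * ε ^ 2) - r ^ 2 := by
        have hR : (0:ℝ) ≤ 1 / (2 * ε ^ 2) - r ^ 2 := by
          rw [sub_nonneg, le_div_iff₀ (by positivity)]; nlinarith
        have hxle : x ≤ (1 / (2 * ε ^ 2) - r ^ 2) ^ 2 := by
          have hdiff : (1 / (2 * ε ^ 2) - r ^ 2) ^ 2 - x = r ^ 4 := by
            rw [hx]; field_simp; ring
          have h4 : (0:ℝ) ≤ r ^ 4 := by positivity
          linarith
        calc lam = Real.sqrt x := hlam
          _ ≤ Real.sqrt ((1 / (2 * ε ^ 2) - r ^ 2) ^ 2) := Real.sqrt_le_sqrt hxle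
          _ = 1 / (2 * ε ^ 2) - r ^ 2 := Real.sqrt_sq hR
      have hexp : Real.exp (-t / (2 * ε ^ 2)) * Real.exp (t * lam) ≤ Real.exp (-(t * r ^ 2)) := by
        rw [← Real.exp_add, Real.exp_le_exp]
        have h2 : t * lam ≤ t * (1 / (2 * ε ^ 2) - r ^ 2) := mul_le_mul_of_nonneg_left hkey ht
        have h3 : t * (1 / (2 * ε ^ 2) - r ^ 2) = t / (2 * ε ^ 2) - t * r ^ 2 := by ring
        rw [h3] at h2
        have h4 : -t / (2 * ε ^ 2) = -(t / (2 * ε ^ 2)) := by ring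
        rw [h4]; linarith
      have hphi : t * phi (t ^ 2 * x) = Real.sinh (t * lam) / lam := by
        rw [eq_div_iff hlampos.ne', hlam]; exact phi_repr_pos x t hx0.le
      have hsinh0 : 0 ≤ Real.sinh (t * lam) := by
        rw [Real.sinh_nonneg_iff]; positivity
      have habs : |t * phi (t ^ 2 * x)| = Real.sinh (t * lam) / lam := by
        rw [hphi, abs_of_nonneg (div_nonneg hsinh0 hlampos.le)]
      have hθtr : θ * t * r ^ 2 ≤ t * r ^ 2 := by
        have h9 : 0 ≤ (1 - θ) * (t * r ^ 2) := mul_nonneg (by linarith) (by positivity)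
        linarith
      rw [div_le_iff₀ hε2, hD, habs]
      by_cases h34 : 4 * ε ^ 2 * r ^ 2 ≤ 3/4
      · -- λ is large: use sinh u ≤ e^u/2
        have hlamlb : 1 / (4 * ε ^ 2) ≤ lam := by
          rw [hlam]

          rw [show (1:ℝ) / (4 * ε ^ 2) = Real.sqrt ((1 / (4 * ε ^ 2)) ^ 2) from
            (Real.sqrt_sq (by positivity)).symm]
          apply Real.sqrt_le_sqrt
          have h14 : ((1:ℝ) / (4 * ε ^ 2)) ^ 2 = 1 / (16 * ε ^ 4) := by
            field_simp; ring
          have hre : r ^ 2 / ε ^ 2 ≤ 3 / (16 * ε ^ 4) := by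
            rw [div_le_div_iff₀ hε2 (by positivity)]; nlinarith
          have hsum : (1:ℝ) / (4 * ε ^ 4) - 3 / (16 * ε ^ 4) = 1 / (16 * ε ^ 4) := by
            field_simp; ring
          rw [h14, hx]; linarith
        calc Real.exp (-t / (2 * ε ^ 2)) * (Real.sinh (t * lam) / lam)
            ≤ Real.exp (-t / (2 * ε ^ 2)) * ((Real.exp (t * lam) / 2) / lam) := by
              have hs2 := sinh_le_half_exp (t * lam)
              gcongr
          _ = Real.exp (-t / (2 * ε ^ 2)) * Real.exp (t * lam) / (2 * lam) := by ring
          _ ≤ Real.exp (-(t * r ^ 2)) / (2 * lam) := by gcongr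
          _ ≤ Real.exp (-(t * r ^ 2)) / (2 * (1 / (4 * ε ^ 2))) := by
              gcongr
              all_goals first | positivity | linarith | exact (Real.exp_pos _).le
          _ = 2 * ε ^ 2 * Real.exp (-(t * r ^ 2)) := by field_simp; ring
          _ ≤ 2 * ε ^ 2 * Real.exp (-θ * t * r ^ 2) := by
              gcongr
              linarith
          _ ≤ C * Real.exp (-θ * t * r ^ 2) * ε ^ 2 := by
              nlinarith [mul_pos (Real.exp_pos (-θ * t * r ^ 2)) hε2]
      · -- λ moderate: use sinh u ≤ u e^u
        push_neg at h34
        have h6 : (1:ℝ) ≤ 6 * (ε ^ 2 * r ^ 2) := by nlinarith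
        have hsinhb : Real.sinh (t * lam) / lam ≤ t * Real.exp (t * lam) := by
          rw [div_le_iff₀ hlampos]
          calc Real.sinh (t * lam) ≤ (t * lam) * Real.exp (t * lam) :=
                sinh_le_mul_exp _ (by positivity)
            _ = t * Real.exp (t * lam) * lam := by ring
        have hhalf := mul_exp_neg_le_one (t * r ^ 2 / 2) (by positivity)
        have hesplit : Real.exp (-(t * r ^ 2))
            = Real.exp (-(t * r ^ 2 / 2)) * Real.exp (-(t * r ^ 2 / 2)) := by
          rw [← Real.exp_add]; congr 1; ring
        have hmono2 : Real.exp (-(t * r ^ 2 / 2)) ≤ Real.exp (-θ * t * r ^ 2) :=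
          Real.exp_le_exp.mpr (by nlinarith)
        calc Real.exp (-t / (2 * ε ^ 2)) * (Real.sinh (t * lam) / lam)
            ≤ Real.exp (-t / (2 * ε ^ 2)) * (t * Real.exp (t * lam)) :=
              mul_le_mul_of_nonneg_left hsinhb hE1pos.le
          _ = t * (Real.exp (-t / (2 * ε ^ 2)) * Real.exp (t * lam)) := by ring
          _ ≤ t * Real.exp (-(t * r ^ 2)) := mul_le_mul_of_nonneg_left hexp ht
          _ ≤ 6 * (ε ^ 2 * r ^ 2) * t * Real.exp (-(t * r ^ 2)) := by
              have := Real.exp_pos (-(t * r ^ 2))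
              nlinarith [mul_nonneg ht this.le]
          _ = 12 * ε ^ 2 * ((t * r ^ 2 / 2) * Real.exp (-(t * r ^ 2 / 2)))
              * Real.exp (-(t * r ^ 2 / 2)) := by rw [hesplit]; ring
          _ ≤ 12 * ε ^ 2 * 1 * Real.exp (-(t * r ^ 2 / 2)) := by gcongr
          _ ≤ 12 * ε ^ 2 * 1 * Real.exp (-θ * t * r ^ 2) := by gcongr
          _ ≤ C * Real.exp (-θ * t * r ^ 2) * ε ^ 2 := by
              nlinarith [mul_pos (Real.exp_pos (-θ * t * r ^ 2)) hε2]
  · -- case (b)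
    intro hrb
    have hv : 1 + θ < 2 * ε * r := by
      rw [div_lt_iff₀ (by positivity)] at hrb; linarith
    have hw : 1 + 2 * θ ≤ 4 * ε ^ 2 * r ^ 2 := by
      have hq : (1 + θ) * (1 + θ) ≤ (2 * ε * r) * (2 * ε * r) :=
        mul_le_mul hv.le hv.le (by linarith) (by positivity)
      nlinarith
    have hWpos : (0:ℝ) < 4 * ε ^ 2 * r ^ 2 - 1 := by linarith
    have hxneg : x < 0 := by
      rw [hx, sub_neg, div_lt_div_iff₀ (by positivity) hε2]
      nlinarith
    have hb := phi_abs_le_inv x t hxneg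
    have hnegx : -x = (4 * ε ^ 2 * r ^ 2 - 1) / (2 * ε ^ 2) ^ 2 := by
      rw [hx]; field_simp; ring
    obtain ⟨s, hs⟩ : ∃ s : ℝ, s = Real.sqrt (4 * ε ^ 2 * r ^ 2 - 1) := ⟨_, rfl⟩
    have hspos : 0 < s := hs ▸ Real.sqrt_pos.mpr hWpos
    have hsq : Real.sqrt (-x) = s / (2 * ε ^ 2) := by
      rw [hnegx, Real.sqrt_div hWpos.le, Real.sqrt_sq (by positivity : (0:ℝ) ≤ 2 * ε ^ 2), hs]
    have hkey : 2 * ε * r ≤ C * s := by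
      have h1 : 2 * ε * r ≤ Real.sqrt (1 + 1/(2*θ)) * s := by
        rw [hs, ← Real.sqrt_mul (by positivity)]
        rw [show 2 * ε * r = Real.sqrt ((2 * ε * r) ^ 2) from
          (Real.sqrt_sq (by positivity)).symm]
        apply Real.sqrt_le_sqrt
        have hinv : 1 / (2*θ) * (2*θ) = 1 := by field_simp
        have hh : (0:ℝ) ≤ 1 / (2*θ) * (4 * ε ^ 2 * r ^ 2 - 1 - 2*θ) :=
          mul_nonneg (by positivity) (by linarith)
        nlinarith
      have h2 : Real.sqrt (1 + 1/(2*θ)) * s ≤ C * s := by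
        apply mul_le_mul_of_nonneg_right _ hspos.le
        linarith
      linarith
    rw [hD, div_le_div_iff₀ hε2 (by positivity)]
    calc Real.exp (-t / (2 * ε ^ 2)) * |t * phi (t ^ 2 * x)| * (ε * r)
        ≤ Real.exp (-t / (2 * ε ^ 2)) * (1 / Real.sqrt (-x)) * (ε * r) := by
          gcongr
        _ = Real.exp (-t / (2 * ε ^ 2)) * (2 * ε ^ 2) * (ε * r) / s := by
          rw [hsq]; field_simp
          try ring
        _ ≤ C * Real.exp (-t / (2 * ε ^ 2)) * ε ^ 2 := by
          rw [div_le_iff₀ hspos]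
          nlinarith [mul_nonneg (mul_nonneg (sub_nonneg.mpr hkey) hE1pos.le) hε2.le]
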